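/- If (X, C) is a cell, then |C| = |X| or |C| = |X| + 1. -/

import Mathlib

/-- `X ⊆ T` is dominant with respect to `C ⊆ I` (for the family of linear orders `o`)
if either `X = ∅`, or `X ≠ ∅` and there is no `y : T` with `min_i X <_i y` for all `i ∈ C`. -/
def Dominant {T I : Type*} (o : I → LinearOrder T) (X : Finset T) (C : Finset I) : Prop :=
  ∀ hX : X.Nonempty, ¬ ∃ y : T, ∀ i ∈ C, (o i).lt (@Finset.min' T (o i) X hX) y

/-- A pair `(X, C)` is a cell if `C ≠ ∅`, `X` is dominant with respect to `C`,
and `|C \ c(X)| ≤ 1`. -/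
def IsCell {T I : Type*} [DecidableEq T] [DecidableEq I]
    (o : I → LinearOrder T) (c : T → I) (X : Finset T) (C : Finset I) : Prop :=
  C.Nonempty ∧ Dominant o X C ∧ (C \ X.image c).card ≤ 1

/-- A 0-cell is a cell `(X, C)` with `|C| = |X|`. -/
def IsZeroCell {T I : Type*} [DecidableEq T] [DecidableEq I]
    (o : I → LinearOrder T) (c : T → I) (X : Finset T) (C : Finset I) : Prop :=
  IsCell o c X C ∧ C.card = X.card

/-- A 1-cell is a cell `(X, C)` with `|C| = |X| + 1`. -/
def IsOneCell {T I : Type*} [DecidableEq T] [DecidableEq I]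
    (o : I → LinearOrder T) (c : T → I) (X : Finset T) (C : Finset I) : Prop :=
  IsCell o c X C ∧ C.card = X.card + 1

/-- A 1-cell `(Y, D)` is a face of a 0-cell `(X, C)` if either `D = C` and
`Y = X \ {x}` for some `x ∈ X`, or `Y = X` and `D = C ∪ {i}` for some `i ∉ C`. -/
def IsFace {T I : Type*} [DecidableEq T] [DecidableEq I]
    (o : I → LinearOrder T) (c : T → I)
    (Y : Finset T) (D : Finset I) (X : Finset T) (C : Finset I) : Prop :=
  IsOneCell o c Y D ∧ IsZeroCell o c X C ∧
    ((D = C ∧ ∃ x ∈ X, Y = X.erase x) ∨ (Y = X ∧ ∃ i, i ∉ C ∧ D = insert i C))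

/-- If `(X, C)` is a cell, then `|C| = |X|` or `|C| = |X| + 1`. -/
theorem stmt3 {T I : Type*} [Fintype T] [Fintype I] [Nonempty T] [Nonempty I]
    [DecidableEq T] [DecidableEq I] (o : I → LinearOrder T) (c : T → I)
    (X : Finset T) (C : Finset I) (hcell : IsCell o c X C) :
    C.card = X.card ∨ C.card = X.card + 1 := by
  obtain ⟨hC, hdom, hcard⟩ := hcell
  have hupper : C.card ≤ X.card + 1 := by
    have h1 : C.card ≤ (C \ X.image c).card + (X.image c).card := by
      calc C.card ≤ ((C \ X.image c) ∪ X.image c).card := by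
            apply Finset.card_le_card
            intro a ha
            by_cases h : a ∈ X.image c
            · exact Finset.mem_union_right _ h
            · exact Finset.mem_union_left _ (Finset.mem_sdiff.mpr ⟨ha, h⟩)
        _ ≤ (C \ X.image c).card + (X.image c).card := Finset.card_union_le _ _
    calc C.card ≤ (C \ X.image c).card + (X.image c).card := h1
      _ ≤ 1 + X.card := Nat.add_le_add hcard (Finset.card_image_le)
      _ = X.card + 1 := Nat.add_comm _ _
  have hlower : X.card ≤ C.card := by
    rcases X.eq_empty_or_nonempty with h | hX
    · simp [h]
    · have key : ∀ x, x ∈ X → ∃ i, i ∈ C ∧ @Finset.min' T (o i) X hX = x := by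
        intro x hx
        by_contra hc
        push_neg at hc
        apply hdom hX
        refine ⟨x, fun i hi => ?_⟩
        letI := o i
        exact lt_of_le_of_ne (Finset.min'_le X x hx) (hc i hi)
      choose f hf1 hf2 using key
      classical
      set g : T → I := fun x => if h : x ∈ X then f x h else Classical.arbitrary I with hg
      apply Finset.card_le_card_of_injOn g
      · intro x hx
        simp only [hg, dif_pos (show x ∈ X from hx)]
        exact hf1 x hx
      · intro x hx y hy hxy
        have hx' : x ∈ X := hx
        have hy' : y ∈ X := hy
        simp only [hg, dif_pos hx', dif_pos hy'] at hxy
        rw [← hf2 x hx', ← hf2 y hy', hxy]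
  omega
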